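/- Let K be any CRG with at most w white vertices and at most b black vertices, where w+b ≥ 1. Then for every p ∈ (0,1), g_K(p) ≥ g_{K(w,b)}(p) = (w/p + b/(1−p))⁻¹. -/

import Mathlib

open Finset

inductive EColor | white | black | gray
deriving DecidableEq

/-- The `p`-weight of an edge color: `p` for white, `1-p` for black, `0` for gray. -/
def wval (p : ℝ) : EColor → ℝ
  | .white => p
  | .black => 1 - p
  | .gray => 0

/-- The matrix `M_K(p)` of a CRG given by vertex colors `vb` (`true` = black)
and edge colors `ec`. -/
def Mmat {V : Type*} [DecidableEq V] (vb : V → Bool) (ec : V → V → EColor) (p : ℝ)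
    (x y : V) : ℝ :=
  if x = y then (if vb x then 1 - p else p) else wval p (ec x y)

/-- `μ` is a probability mass. -/
def IsProb {V : Type*} [Fintype V] (μ : V → ℝ) : Prop :=
  (∀ x, 0 ≤ μ x) ∧ ∑ x, μ x = 1

/-- The quadratic form `⟨μ, M_K(p) μ⟩`. -/
def QF {V : Type*} [Fintype V] [DecidableEq V] (vb : V → Bool) (ec : V → V → EColor)
    (p : ℝ) (μ : V → ℝ) : ℝ :=
  ∑ x, ∑ y, μ x * Mmat vb ec p x y * μ y

/-- `g` is the minimum of the quadratic form over probability masses, i.e. `g = g_K(p)`. -/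
def gIs {V : Type*} [Fintype V] [DecidableEq V] (vb : V → Bool) (ec : V → V → EColor)
    (p g : ℝ) : Prop :=
  IsLeast {t | ∃ μ : V → ℝ, IsProb μ ∧ t = QF vb ec p μ} g

/-- The weighted gray-degree `d_G(u) = ∑_{v : uv gray} μ(v)`. -/
def grayDeg {V : Type*} [Fintype V] [DecidableEq V] (ec : V → V → EColor) (μ : V → ℝ)
    (u : V) : ℝ :=
  ∑ v ∈ Finset.univ.filter (fun v => v ≠ u ∧ ec u v = EColor.gray), μ v

lemma key (A B a c : ℝ) (hA : 0 ≤ A) (hB : 0 ≤ B) (hAB : A + B = 1)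
    (ha : 0 ≤ a) (hc : 0 ≤ c) (hac : 0 < a + c)
    (ha0 : a = 0 → A = 0) (hc0 : c = 0 → B = 0) :
    (a + c)⁻¹ ≤ A ^ 2 / a + B ^ 2 / c := by
  rw [inv_le_iff_one_le_mul₀ hac]
  rcases eq_or_lt_of_le ha with ha' | ha'
  · have hA0 := ha0 ha'.symm
    have hc' : 0 < c := by linarith [hac, ha'.symm ▸ hac]
    have hB1 : B = 1 := by linarith
    rw [← ha', hA0, hB1]
    field_simp
    simp
  rcases eq_or_lt_of_le hc with hc' | hc'
  · have hB0 := hc0 hc'.symm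
    have hA1 : A = 1 := by linarith
    rw [← hc', hB0, hA1]
    field_simp
    simp
  have h : a * c ≤ (A ^ 2 * c + B ^ 2 * a) * (a + c) := by
    have h2 : a * c = a * c * (A + B) ^ 2 := by rw [hAB]; ring
    nlinarith [sq_nonneg (A * c - B * a)]
  have e : A ^ 2 / a + B ^ 2 / c = (A ^ 2 * c + B ^ 2 * a) / (a * c) := by
    field_simp
  rw [e, div_mul_eq_mul_div, le_div_iff₀ (by positivity), one_mul]
  linarith


/-- any CRG with at most `w` white and at most `b` black vertices has
`g_K(p) ≥ g_{K(w,b)}(p) = (w/p + b/(1-p))⁻¹`. -/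
theorem stmt4 {V : Type*} [Fintype V] [DecidableEq V]
    (vb : V → Bool) (ec : V → V → EColor) (p g : ℝ) (hp0 : 0 < p) (hp1 : p < 1)
    (w b : ℕ) (hwb : 1 ≤ w + b)
    (hw : (Finset.univ.filter fun x => vb x = false).card ≤ w)
    (hb : (Finset.univ.filter fun x => vb x = true).card ≤ b)
    (hg : gIs vb ec p g) :
    ((w : ℝ) / p + (b : ℝ) / (1 - p))⁻¹ ≤ g := by
  obtain ⟨⟨μ, ⟨hμ0, hμ1⟩, rfl⟩, _⟩ := hg
  set W := Finset.univ.filter fun x : V => vb x = false with hWdef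
  set Bs := Finset.univ.filter fun x : V => vb x = true with hBdef
  have hMnn : ∀ x y, 0 ≤ Mmat vb ec p x y := by
    intro x y
    unfold Mmat
    split_ifs
    · linarith
    · linarith
    · cases h : ec x y <;> simp [wval] <;> linarith
  -- lower bound by the diagonal
  have hdiag : ∑ x, μ x * Mmat vb ec p x x * μ x ≤ QF vb ec p μ := by
    unfold QF
    apply Finset.sum_le_sum
    intro x _
    apply Finset.single_le_sum (f := fun y => μ x * Mmat vb ec p x y * μ y)
      (fun y _ => mul_nonneg (mul_nonneg (hμ0 x) (hMnn x y)) (hμ0 y)) (mem_univ x)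
  have hdiag2 : ∑ x, μ x * Mmat vb ec p x x * μ x
      = p * ∑ x ∈ W, μ x ^ 2 + (1 - p) * ∑ x ∈ Bs, μ x ^ 2 := by
    rw [Finset.mul_sum, Finset.mul_sum,
      ← Finset.sum_filter_add_sum_filter_not Finset.univ (fun x => vb x = false)
        (fun x => μ x * Mmat vb ec p x x * μ x)]
    have : Finset.univ.filter (fun x : V => ¬ vb x = false) = Bs := by
      simp [hBdef]
    rw [this]
    congr 1
    · apply Finset.sum_congr rfl
      intro x hx
      simp only [hWdef, mem_filter] at hx
      simp [Mmat, hx.2]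
      ring
    · apply Finset.sum_congr rfl
      intro x hx
      simp only [hBdef, mem_filter] at hx
      simp [Mmat, hx.2]
      ring
  set A := ∑ x ∈ W, μ x with hAdef
  set B := ∑ x ∈ Bs, μ x with hBsum
  have hA0 : 0 ≤ A := Finset.sum_nonneg fun x _ => hμ0 x
  have hB0 : 0 ≤ B := Finset.sum_nonneg fun x _ => hμ0 x
  have hAB : A + B = 1 := by
    rw [hAdef, hBsum, ← hμ1,
      ← Finset.sum_filter_add_sum_filter_not Finset.univ (fun x => vb x = false) μ]
    congr 1
    simp [hBdef]
  have hCSW : A ^ 2 ≤ (w : ℝ) * ∑ x ∈ W, μ x ^ 2 := by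
    calc A ^ 2 ≤ (W.card : ℝ) * ∑ x ∈ W, μ x ^ 2 := by
          exact_mod_cast sq_sum_le_card_mul_sum_sq (s := W) (f := μ)
      _ ≤ (w : ℝ) * ∑ x ∈ W, μ x ^ 2 := by
          apply mul_le_mul_of_nonneg_right (by exact_mod_cast hw)
          exact Finset.sum_nonneg fun x _ => sq_nonneg _
  have hCSB : B ^ 2 ≤ (b : ℝ) * ∑ x ∈ Bs, μ x ^ 2 := by
    calc B ^ 2 ≤ (Bs.card : ℝ) * ∑ x ∈ Bs, μ x ^ 2 := by
          exact_mod_cast sq_sum_le_card_mul_sum_sq (s := Bs) (f := μ)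
      _ ≤ (b : ℝ) * ∑ x ∈ Bs, μ x ^ 2 := by
          apply mul_le_mul_of_nonneg_right (by exact_mod_cast hb)
          exact Finset.sum_nonneg fun x _ => sq_nonneg _
  have h1p : (0:ℝ) < 1 - p := by linarith
  have hsumW : 0 ≤ ∑ x ∈ W, μ x ^ 2 := Finset.sum_nonneg fun x _ => sq_nonneg _
  have hsumB : 0 ≤ ∑ x ∈ Bs, μ x ^ 2 := Finset.sum_nonneg fun x _ => sq_nonneg _
  have step1 : A ^ 2 / ((w : ℝ) / p) ≤ p * ∑ x ∈ W, μ x ^ 2 := by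
    rcases Nat.eq_zero_or_pos w with hw0 | hw0
    · simp [hw0]; positivity
    · rw [div_div_eq_mul_div, div_le_iff₀ (by positivity)]
      calc A ^ 2 * p ≤ ((w : ℝ) * ∑ x ∈ W, μ x ^ 2) * p :=
            mul_le_mul_of_nonneg_right hCSW hp0.le
        _ = p * (∑ x ∈ W, μ x ^ 2) * (w : ℝ) := by ring
  have step2 : B ^ 2 / ((b : ℝ) / (1 - p)) ≤ (1 - p) * ∑ x ∈ Bs, μ x ^ 2 := by
    rcases Nat.eq_zero_or_pos b with hb0 | hb0
    · simp [hb0]; positivity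
    · rw [div_div_eq_mul_div, div_le_iff₀ (by positivity)]
      calc B ^ 2 * (1 - p) ≤ ((b : ℝ) * ∑ x ∈ Bs, μ x ^ 2) * (1 - p) :=
            mul_le_mul_of_nonneg_right hCSB h1p.le
        _ = (1 - p) * (∑ x ∈ Bs, μ x ^ 2) * (b : ℝ) := by ring
  have hac : (0:ℝ) < (w : ℝ) / p + (b : ℝ) / (1 - p) := by
    rcases Nat.eq_zero_or_pos w with hw0 | hw0
    · have hb0 : 0 < b := by omega
      have : (0:ℝ) < (b : ℝ) / (1 - p) := by positivity
      have : (0:ℝ) ≤ (w : ℝ) / p := by positivity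
      linarith
    · have : (0:ℝ) < (w : ℝ) / p := by
        apply div_pos _ hp0; exact_mod_cast hw0
      have : (0:ℝ) ≤ (b : ℝ) / (1 - p) := by positivity
      linarith
  have hkey := key A B ((w : ℝ) / p) ((b : ℝ) / (1 - p)) hA0 hB0 hAB
    (by positivity) (by positivity) hac
    (by intro h
        have : w = 0 := by field_simp at h; simpa using h
        have hWe : W = ∅ := by
          rw [← Finset.card_eq_zero]; omega
        simp [hAdef, hWe])
    (by intro h
        have : b = 0 := by field_simp at h; simpa using h
        have hBe : Bs = ∅ := by
          rw [← Finset.card_eq_zero]; omega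
        simp [hBsum, hBe])
  calc ((w : ℝ) / p + (b : ℝ) / (1 - p))⁻¹
      ≤ A ^ 2 / ((w : ℝ) / p) + B ^ 2 / ((b : ℝ) / (1 - p)) := hkey
    _ ≤ p * ∑ x ∈ W, μ x ^ 2 + (1 - p) * ∑ x ∈ Bs, μ x ^ 2 := add_le_add step1 step2
    _ = ∑ x, μ x * Mmat vb ec p x x * μ x := hdiag2.symm
    _ ≤ QF vb ec p μ := hdiag
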